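/- arXiv:2002.10192 — 5 statements merged into one kernel-verified Lean document; each statement's English description precedes it below -/
import Mathlib

section
/- Let R be a ring. The set V(R) of all products of elements of the form (1 + rs)(1 + sr)⁻¹, where r, s ∈ R and 1 + rs is a unit, generates a subgroup of R× that contains the commutator subgroup [R×, R×]. -/
/-- The subgroup `V(R)` of `Rˣ` generated by all elements
`(1+rs)(1+sr)⁻¹` (with `r, s ∈ R` such that `1+rs` — and hence `1+sr` — is a unit)
contains the commutator subgroup `[Rˣ, Rˣ]`. -/
theorem stmt_1 {R : Type*} [Ring R] :
    ⁅(⊤ : Subgroup Rˣ), (⊤ : Subgroup Rˣ)⁆ ≤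
      Subgroup.closure {u : Rˣ | ∃ (v w : Rˣ) (r s : R),
        (v : R) = 1 + r * s ∧ (w : R) = 1 + s * r ∧ u = v * w⁻¹} := by
  rw [Subgroup.commutator_le]
  intro a _ b _
  apply Subgroup.subset_closure
  refine ⟨a * b, b * a, (a : R), (b : R) - ((a⁻¹ : Rˣ) : R), ?_, ?_, ?_⟩
  · rw [mul_sub, Units.mul_inv]; push_cast; abel
  · rw [sub_mul, Units.inv_mul]; push_cast; abel
  · rw [commutatorElement_def, mul_inv_rev]
    group
end

section
/- Let A be a ring, κ : A → A a ring automorphism with κᴺ = id for some positive integer N. Define Υ : A_κ((τ)) → Mat(N×N, A((t))) by sending Σ aᵢτⁱ to Σ Mᵢ(aᵢ)tⁱ, where for 0 ≤ ℓ < N the matrix M_ℓ(a) has (j, j+ℓ mod N)-entries given by suitable powers κᵏ(a) as specified (namely M_ℓ(a) is the block matrix with D_{N−ℓ}(κ^{ℓ+1}(a)) in the upper-right and D_ℓ(a) in the lower-left, where D_m(a) = diag(κᵐ(a), κ^{m−1}(a), …, κ(a))). Then Υ is a ring homomorphism. -/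
/-- The additive group of formal series `Σ_{i ≥ -N} aᵢτⁱ`: functions `ℤ → A`
whose support is bounded below. -/
def lbSupport (A : Type*) [Ring A] : AddSubgroup (ℤ → A) where
  carrier := {f | ∃ N : ℤ, ∀ n < N, f n = 0}
  zero_mem' := ⟨0, fun _ _ => rfl⟩
  add_mem' := by
    rintro f g ⟨N, hN⟩ ⟨M, hM⟩
    exact ⟨min N M, fun n hn => by
      simp [Pi.add_apply, hN n (lt_of_lt_of_le hn (min_le_left N M)),
        hM n (lt_of_lt_of_le hn (min_le_right N M))]⟩
  neg_mem' := by
    rintro f ⟨N, hN⟩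
    exact ⟨N, fun n hn => by simp [Pi.neg_apply, hN n hn]⟩

/-- Let `κ` be a ring automorphism of `A` with `κᴺ = id` (`N > 0`).
Let `R` be the twisted Laurent series ring `A_κ((τ))` and `R'` the untwisted
Laurent series ring `A((t))` (both encoded abstractly via additive equivalences
`e`, `e'` onto bounded-below coefficient sequences with the corresponding
convolution products).  Define `Υ : R → Mat(N×N, A((t)))` by sending
`Σ aᵢτⁱ` to `Σ Mᵢ(aᵢ)tⁱ`, where `M_ℓ(a)` is the permutation-like matrix whose
`(r, c)`-entry is `κ^{N−r}(a)` when `c ≡ r − ℓ (mod N)` and `0` otherwise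
(i.e. the block matrix with the diagonal blocks `D_m(a) = diag(κᵐ(a), …, κ(a))`
placed in the upper-right and lower-left corners, as in the paper's Example for
`N = 3`).  Then `Υ` is a ring homomorphism. -/
theorem stmt_10 {A R R' : Type*} [Ring A] [Ring R] [Ring R'] (κ : RingAut A)
    (N : ℕ) (hNpos : 0 < N) (hκ : κ ^ N = 1)
    (e : R ≃+ lbSupport A)
    (hone : ∀ n : ℤ, (e 1).1 n = if n = 0 then 1 else 0)
    (hmul : ∀ f g : R, ∀ n : ℤ,
      (e (f * g)).1 n = ∑ᶠ i : ℤ, (e f).1 i * (κ ^ i) ((e g).1 (n - i)))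
    (e' : R' ≃+ lbSupport A)
    (hone' : ∀ n : ℤ, (e' 1).1 n = if n = 0 then 1 else 0)
    (hmul' : ∀ f g : R', ∀ n : ℤ,
      (e' (f * g)).1 n = ∑ᶠ i : ℤ, (e' f).1 i * (e' g).1 (n - i))
    (U : R → Matrix (Fin N) (Fin N) R')
    (hU : ∀ (f : R) (r c : Fin N) (i : ℤ),
      (e' (U f r c)).1 i =
        if ((c : ℕ) : ZMod N) = ((r : ℕ) : ZMod N) - (i : ZMod N) then
          (κ ^ (N - (r : ℕ))) ((e f).1 i)
        else 0) :
    (∀ x y : R, U (x + y) = U x + U y) ∧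
    (∀ x y : R, U (x * y) = U x * U y) ∧
    U 1 = 1 := by
  haveI : NeZero N := ⟨hNpos.ne'⟩
  have hκz : κ ^ (N : ℤ) = 1 := by rw [zpow_natCast, hκ]
  have hcong : ∀ a b : ℤ, ((a : ZMod N) = (b : ZMod N)) → κ ^ a = κ ^ b := by
    intro a b h
    obtain ⟨q, hq⟩ : (N : ℤ) ∣ b - a := by
      have h0 : ((b - a : ℤ) : ZMod N) = 0 := by push_cast; rw [h]; ring
      exact (ZMod.intCast_zmod_eq_zero_iff_dvd (b - a) N).mp h0
    have hb : b = a + (N : ℤ) * q := by linarith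
    rw [hb, zpow_add, zpow_mul, hκz, one_zpow, mul_one]
  have hcongA : ∀ a b : ℤ, ((a : ZMod N) = (b : ZMod N)) → ∀ u : A,
      (κ ^ a) u = (κ ^ b) u := fun a b h u => by rw [hcong a b h]
  have hfinj : ∀ a b : Fin N, (((a : ℕ) : ZMod N) = ((b : ℕ) : ZMod N)) → a = b := by
    intro a b h
    have h2 := congrArg ZMod.val h
    rwa [ZMod.val_natCast_of_lt a.2, ZMod.val_natCast_of_lt b.2, Fin.val_eq_val] at h2
  have hinj : ∀ u v : R', (∀ m : ℤ, (e' u).1 m = (e' v).1 m) → u = v := by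
    intro u v h
    exact e'.injective (Subtype.ext (funext h))
  refine ⟨?_, ?_, ?_⟩
  · -- additivity
    intro x y
    ext r c
    apply hinj
    intro m
    have hadd : (U x + U y) r c = U x r c + U y r c := rfl
    rw [hadd, map_add]
    have hc : (e' (U x r c) + e' (U y r c)).1 m
        = (e' (U x r c)).1 m + (e' (U y r c)).1 m := rfl
    rw [hc, hU, hU, hU, map_add]
    have hc2 : ((e x + e y : lbSupport A)).1 m = (e x).1 m + (e y).1 m := rfl
    rw [hc2]
    by_cases h : ((c : ℕ) : ZMod N) = ((r : ℕ) : ZMod N) - (m : ZMod N)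
    · rw [if_pos h, if_pos h, if_pos h, map_add]
    · rw [if_neg h, if_neg h, if_neg h, add_zero]
  · -- multiplicativity
    intro x y
    ext r c
    apply hinj
    intro n
    obtain ⟨Nx, hNx⟩ := (e x).2
    obtain ⟨Ny, hNy⟩ := (e y).2
    have hfin0 : (Function.support fun i : ℤ =>
        (e x).1 i * (κ ^ i) ((e y).1 (n - i))).Finite := by
      apply (Set.finite_Icc Nx (n - Ny)).subset
      intro i hi
      simp only [Function.mem_support] at hi
      constructor
      · by_contra h; push_neg at h; exact hi (by rw [hNx i h, zero_mul])
      · by_contra h; push_neg at h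
        exact hi (by rw [hNy (n - i) (by linarith), map_zero, mul_zero])
    have hfing : (Function.support fun i : ℤ =>
        (κ ^ (N - (r : ℕ))) ((e x).1 i * (κ ^ i) ((e y).1 (n - i)))).Finite := by
      apply hfin0.subset
      intro i hi
      simp only [Function.mem_support] at hi ⊢
      intro h
      exact hi (by rw [h, map_zero])
    have hL : (e' (U (x * y) r c)).1 n =
        if ((c : ℕ) : ZMod N) = ((r : ℕ) : ZMod N) - (n : ZMod N) then
          ∑ᶠ i : ℤ, (κ ^ (N - (r : ℕ))) ((e x).1 i * (κ ^ i) ((e y).1 (n - i)))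
        else 0 := by
      rw [hU]
      by_cases hq : ((c : ℕ) : ZMod N) = ((r : ℕ) : ZMod N) - (n : ZMod N)
      · rw [if_pos hq, if_pos hq, hmul]
        exact (κ ^ (N - (r : ℕ))).toAddEquiv.map_finsum _
      · rw [if_neg hq, if_neg hq]
    have hterm : ∀ (k : Fin N) (i : ℤ),
        (e' (U x r k)).1 i * (e' (U y k c)).1 (n - i) =
        if (((k : ℕ) : ZMod N) = ((r : ℕ) : ZMod N) - (i : ZMod N)) ∧
            (((c : ℕ) : ZMod N) = ((r : ℕ) : ZMod N) - (n : ZMod N)) then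
          (κ ^ (N - (r : ℕ))) ((e x).1 i * (κ ^ i) ((e y).1 (n - i)))
        else 0 := by
      intro k i
      rw [hU, hU]
      by_cases hP : ((k : ℕ) : ZMod N) = ((r : ℕ) : ZMod N) - (i : ZMod N)
      · have hQeq : (((c : ℕ) : ZMod N) = ((k : ℕ) : ZMod N) - ((n - i : ℤ) : ZMod N)) ↔
            (((c : ℕ) : ZMod N) = ((r : ℕ) : ZMod N) - (n : ZMod N)) := by
          rw [hP]; push_cast; constructor <;> intro h <;> rw [h] <;> ring
        by_cases hq : ((c : ℕ) : ZMod N) = ((r : ℕ) : ZMod N) - (n : ZMod N)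
        · rw [if_pos hP, if_pos (hQeq.mpr hq), if_pos ⟨hP, hq⟩, map_mul]
          congr 1
          have key : (κ ^ (((N - (k : ℕ) : ℕ)) : ℤ)) ((e y).1 (n - i)) =
              (κ ^ ((((N - (r : ℕ) : ℕ)) : ℤ) + i)) ((e y).1 (n - i)) := by
            apply hcongA
            push_cast [Nat.cast_sub k.2.le, Nat.cast_sub r.2.le]
            rw [ZMod.natCast_self, hP]
            ring
          calc (κ ^ (N - (k : ℕ))) ((e y).1 (n - i))
              = (κ ^ (((N - (k : ℕ) : ℕ)) : ℤ)) ((e y).1 (n - i)) := by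
                rw [zpow_natCast]
            _ = (κ ^ ((((N - (r : ℕ) : ℕ)) : ℤ) + i)) ((e y).1 (n - i)) := key
            _ = (κ ^ (((N - (r : ℕ) : ℕ)) : ℤ)) ((κ ^ i) ((e y).1 (n - i))) := by
                rw [zpow_add]; rfl
            _ = (κ ^ (N - (r : ℕ))) ((κ ^ i) ((e y).1 (n - i))) := by
                rw [zpow_natCast]
        · rw [if_neg (fun h => hq (hQeq.mp h)), mul_zero,
            if_neg (fun h => hq h.2)]
      · rw [if_neg hP, zero_mul, if_neg (fun h => hP h.1)]
    have hR : (e' ((U x * U y) r c)).1 n =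
        ∑ k : Fin N, ∑ᶠ i : ℤ, (e' (U x r k)).1 i * (e' (U y k c)).1 (n - i) := by
      have h1 : (U x * U y) r c = ∑ k : Fin N, U x r k * U y k c := Matrix.mul_apply
      rw [h1, map_sum]
      have h2 : ((∑ k : Fin N, e' (U x r k * U y k c) : lbSupport A) : ℤ → A)
          = ∑ k : Fin N, ((e' (U x r k * U y k c) : lbSupport A) : ℤ → A) :=
        AddSubmonoidClass.coe_finset_sum _ _
      have h3 : (∑ k : Fin N, e' (U x r k * U y k c) : lbSupport A).1 n
          = ∑ k : Fin N, (e' (U x r k * U y k c)).1 n := by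
        rw [show (∑ k : Fin N, e' (U x r k * U y k c) : lbSupport A).1 n
            = ((∑ k : Fin N, e' (U x r k * U y k c) : lbSupport A) : ℤ → A) n from rfl,
          h2, Finset.sum_apply]
      rw [h3]
      exact Finset.sum_congr rfl fun k _ => hmul' _ _ n
    rw [hL, hR]
    by_cases hq : ((c : ℕ) : ZMod N) = ((r : ℕ) : ZMod N) - (n : ZMod N)
    · rw [if_pos hq]
      have hstep : ∀ k : Fin N,
          (∑ᶠ i : ℤ, (e' (U x r k)).1 i * (e' (U y k c)).1 (n - i)) =
          ∑ᶠ i : ℤ, (if ((k : ℕ) : ZMod N) = ((r : ℕ) : ZMod N) - (i : ZMod N) then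
            (κ ^ (N - (r : ℕ))) ((e x).1 i * (κ ^ i) ((e y).1 (n - i))) else 0) := by
        intro k
        refine finsum_congr fun i => ?_
        rw [hterm k i]
        by_cases hP : ((k : ℕ) : ZMod N) = ((r : ℕ) : ZMod N) - (i : ZMod N)
        · rw [if_pos ⟨hP, hq⟩, if_pos hP]
        · rw [if_neg (fun h => hP h.1), if_neg hP]
      rw [Finset.sum_congr rfl fun k _ => hstep k, ← finsum_sum_comm]
      · refine finsum_congr fun i => ?_
        symm
        set k₀ : Fin N := ⟨(((r : ℕ) : ZMod N) - (i : ZMod N)).val, ZMod.val_lt _⟩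
          with hk0
        have hk0c : ((k₀ : ℕ) : ZMod N) = ((r : ℕ) : ZMod N) - (i : ZMod N) :=
          ZMod.natCast_rightInverse _
        have hiff : ∀ k : Fin N,
            (((k : ℕ) : ZMod N) = ((r : ℕ) : ZMod N) - (i : ZMod N)) ↔ k = k₀ := by
          intro k
          constructor
          · intro h; exact hfinj k k₀ (by rw [h, hk0c])
          · rintro rfl; exact hk0c
        calc (∑ k : Fin N, if ((k : ℕ) : ZMod N) = ((r : ℕ) : ZMod N) - (i : ZMod N)
              then (κ ^ (N - (r : ℕ))) ((e x).1 i * (κ ^ i) ((e y).1 (n - i))) else 0)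
            = ∑ k : Fin N, if k = k₀
              then (κ ^ (N - (r : ℕ))) ((e x).1 i * (κ ^ i) ((e y).1 (n - i))) else 0 := by
              refine Finset.sum_congr rfl fun k _ => ?_
              by_cases h : ((k : ℕ) : ZMod N) = ((r : ℕ) : ZMod N) - (i : ZMod N)
              · rw [if_pos h, if_pos ((hiff k).mp h)]
              · rw [if_neg h, if_neg (fun h2 => h ((hiff k).mpr h2))]
          _ = (κ ^ (N - (r : ℕ))) ((e x).1 i * (κ ^ i) ((e y).1 (n - i))) := by
              rw [Finset.sum_ite_eq' Finset.univ k₀, if_pos (Finset.mem_univ _)]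
      · intro k _
        apply hfing.subset
        intro i hi
        simp only [Function.mem_support] at hi ⊢
        intro h
        apply hi
        rw [h, ite_self]
    · rw [if_neg hq]
      refine (Finset.sum_eq_zero fun k _ => ?_).symm
      have : (∑ᶠ i : ℤ, (e' (U x r k)).1 i * (e' (U y k c)).1 (n - i))
          = ∑ᶠ _ : ℤ, (0 : A) := by
        refine finsum_congr fun i => ?_
        rw [hterm k i, if_neg (fun h => hq h.2)]
      rw [this, finsum_zero]
  · -- unit
    ext r c
    apply hinj
    intro m
    rw [hU, Matrix.one_apply]
    by_cases hm : m = 0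
    · subst hm
      have hcond : (((c : ℕ) : ZMod N) = ((r : ℕ) : ZMod N) - ((0 : ℤ) : ZMod N)) ↔
          r = c := by
        push_cast
        rw [sub_zero]
        constructor
        · intro h; exact (hfinj c r h).symm
        · rintro rfl; rfl
      by_cases h : r = c
      · rw [if_pos (hcond.mpr h), if_pos h, hone, hone', if_pos rfl, map_one]
      · rw [if_neg (fun h2 => h (hcond.mp h2)), if_neg h, map_zero]
        rfl
    · have h1 : (e 1).1 m = 0 := by rw [hone, if_neg hm]
      by_cases h : r = c
      · rw [if_pos h, hone', if_neg hm]
        split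
        · rw [h1, map_zero]
        · rfl
      · rw [if_neg h, map_zero]
        have : ((0 : lbSupport A)).1 m = 0 := rfl
        rw [this]
        split
        · rw [h1, map_zero]
        · rfl
end

section
/- Let A be a ring containing ℚ and κ an automorphism of A. The logarithm log(1 + μ) = Σ_{n≥1} (−1)^{n−1} μⁿ/n, for μ ∈ τ·A_κ[[τ]], is well-defined as a map from W(A, κ) to the completed quotient P̄ = ∏_{n≥0} Pₙ/Pₙ', and descends to a group homomorphism Log : W(A,κ)/N → P̄ where the multiplicative structure on the source maps to the additive structure on the target: for u, v ∈ W(A, κ), log(uv) ≡ log(u) + log(v) in P̄. -/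
section Stmt12Aux

variable {A R : Type*} [Ring A] [Algebra ℚ A] [Ring R]

/-- The commutator subgroup `Pₙ'` in coefficient form. -/
def s12C (κ : RingAut A) (n : ℕ) : AddSubgroup A :=
  AddSubgroup.closure {z : A | ∃ (x y : A) (k : ℕ), k ≤ n ∧
    z = x * (κ ^ k) y - y * (κ ^ (n - k)) x}

theorem s12C_qsmul {κ : RingAut A} {n : ℕ} (q : ℚ) {z : A} (hz : z ∈ s12C κ n) :
    q • z ∈ s12C κ n := by
  induction hz using AddSubgroup.closure_induction with
  | mem w hw =>
      obtain ⟨x, y, k, hk, rfl⟩ := hw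
      apply AddSubgroup.subset_closure
      refine ⟨q • x, y, k, hk, ?_⟩
      rw [map_rat_smul]
      simp [smul_sub, smul_mul_assoc, mul_smul_comm]
  | zero => simpa using (s12C κ n).zero_mem
  | add x y hx hy ihx ihy => simpa [smul_add] using add_mem ihx ihy
  | neg x hx ihx => simpa [smul_neg] using neg_mem ihx

variable (κ : RingAut A) (e : R ≃+ (ℕ → A))

/-- Cyclicity: the `n`-th coefficient of `fg - gf` lies in the commutator subgroup. -/
theorem s12_cyc
    (hmul : ∀ f g : R, ∀ n : ℕ,
      e (f * g) n = ∑ p ∈ Finset.HasAntidiagonal.antidiagonal n, e f p.1 * (κ ^ p.1) (e g p.2))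
    (f g : R) (n : ℕ) : e (f * g) n - e (g * f) n ∈ s12C κ n := by
  rw [hmul, hmul, Finset.Nat.sum_antidiagonal_eq_sum_range_succ_mk,
    Finset.Nat.sum_antidiagonal_eq_sum_range_succ_mk,
    ← Finset.sum_range_reflect (fun i => e g i * (κ ^ i) (e f (n - i))) (n + 1),
    ← Finset.sum_sub_distrib]
  refine AddSubgroup.sum_mem _ fun i hi => ?_
  rw [Finset.mem_range, Nat.lt_succ_iff] at hi
  apply AddSubgroup.subset_closure
  refine ⟨e f i, e g (n - i), i, hi, ?_⟩
  have h1 : n + 1 - 1 - i = n - i := by omega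
  have h2 : n - (n - i) = i := by omega
  rw [h1, h2]

/-- Low-order vanishing multiplies. -/
theorem s12_ord_mul
    (hmul : ∀ f g : R, ∀ n : ℕ,
      e (f * g) n = ∑ p ∈ Finset.HasAntidiagonal.antidiagonal n, e f p.1 * (κ ^ p.1) (e g p.2))
    {j k : ℕ} {x y : R}
    (hx : ∀ m, m < j → e x m = 0) (hy : ∀ m, m < k → e y m = 0) :
    ∀ m, m < j + k → e (x * y) m = 0 := by
  intro m hm
  rw [hmul]
  refine Finset.sum_eq_zero fun p hp => ?_
  rw [Finset.HasAntidiagonal.mem_antidiagonal] at hp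
  by_cases h : p.1 < j
  · rw [hx _ h, zero_mul]
  · rw [hy p.2 (by omega), map_zero, mul_zero]

theorem s12_ord_pow
    (hmul : ∀ f g : R, ∀ n : ℕ,
      e (f * g) n = ∑ p ∈ Finset.HasAntidiagonal.antidiagonal n, e f p.1 * (κ ^ p.1) (e g p.2))
    {x : R} (hx : ∀ m, m < 1 → e x m = 0) :
    ∀ k : ℕ, ∀ m, m < k → e (x ^ k) m = 0 := by
  intro k
  induction k with
  | zero => intro m hm; omega
  | succ k ih =>
      intro m hm
      rw [pow_succ]
      exact s12_ord_mul κ e hmul ih hx m (by omega)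

/-- Vanishing up to degree n is preserved by right multiplication. -/
theorem s12_Zmul_right
    (hmul : ∀ f g : R, ∀ n : ℕ,
      e (f * g) n = ∑ p ∈ Finset.HasAntidiagonal.antidiagonal n, e f p.1 * (κ ^ p.1) (e g p.2))
    {n : ℕ} {w : R} (hw : ∀ m, m ≤ n → e w m = 0) (q : R) :
    ∀ m, m ≤ n → e (w * q) m = 0 := by
  intro m hm
  rw [hmul]
  refine Finset.sum_eq_zero fun p hp => ?_
  rw [Finset.HasAntidiagonal.mem_antidiagonal] at hp
  rw [hw p.1 (by omega), zero_mul]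

theorem s12_Zmul_left
    (hmul : ∀ f g : R, ∀ n : ℕ,
      e (f * g) n = ∑ p ∈ Finset.HasAntidiagonal.antidiagonal n, e f p.1 * (κ ^ p.1) (e g p.2))
    {n : ℕ} {w : R} (hw : ∀ m, m ≤ n → e w m = 0) (q : R) :
    ∀ m, m ≤ n → e (q * w) m = 0 := by
  intro m hm
  rw [hmul]
  refine Finset.sum_eq_zero fun p hp => ?_
  rw [Finset.HasAntidiagonal.mem_antidiagonal] at hp
  rw [hw p.2 (by omega), map_zero, mul_zero]

/-- The Euler operator `τ d/dτ` in coefficient form. -/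
def s12D (x : R) : R := e.symm (fun m => m • e x m)

theorem s12D_coeff (x : R) (m : ℕ) : e (s12D e x) m = m • e x m := by
  simp [s12D]

theorem s12D_sub (x y : R) : s12D e (x - y) = s12D e x - s12D e y := by
  apply e.injective
  funext m
  simp [s12D_coeff, smul_sub]

theorem s12D_one (hone : ∀ n : ℕ, e 1 n = if n = 0 then 1 else 0) :
    s12D e (1 : R) = 0 := by
  apply e.injective
  funext m
  rcases eq_or_ne m 0 with rfl | h
  · simp [s12D_coeff, hone]
  · simp [s12D_coeff, hone, h]

theorem s12D_zero_coeff (x : R) : ∀ m, m < 1 → e (s12D e x) m = 0 := by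
  intro m hm
  interval_cases m
  simp [s12D_coeff]

theorem s12D_mul
    (hmul : ∀ f g : R, ∀ n : ℕ,
      e (f * g) n = ∑ p ∈ Finset.HasAntidiagonal.antidiagonal n, e f p.1 * (κ ^ p.1) (e g p.2))
    (x y : R) : s12D e (x * y) = s12D e x * y + x * s12D e y := by
  apply e.injective
  funext m
  have : e (s12D e x * y + x * s12D e y) m
      = e (s12D e x * y) m + e (x * s12D e y) m := by
    rw [map_add]; rfl
  rw [s12D_coeff, this, hmul, hmul, hmul, Finset.smul_sum, ← Finset.sum_add_distrib]
  refine Finset.sum_congr rfl fun p hp => ?_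
  rw [Finset.HasAntidiagonal.mem_antidiagonal] at hp
  rw [s12D_coeff, s12D_coeff, map_nsmul, smul_mul_assoc, mul_smul_comm, ← hp, add_smul]

theorem s12D_pow
    (hmul : ∀ f g : R, ∀ n : ℕ,
      e (f * g) n = ∑ p ∈ Finset.HasAntidiagonal.antidiagonal n, e f p.1 * (κ ^ p.1) (e g p.2))
    (x : R) : ∀ k : ℕ,
      s12D e (x ^ (k + 1)) = ∑ i ∈ Finset.range (k + 1), x ^ i * s12D e x * x ^ (k - i) := by
  intro k
  induction k with
  | zero => simp
  | succ k ih =>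
      have hx : x ^ (k + 2) = x * x ^ (k + 1) := by rw [pow_succ']
      rw [hx, s12D_mul κ e hmul, ih,
        Finset.sum_range_succ' (fun i => x ^ i * s12D e x * x ^ (k + 1 - i)) (k + 1),
        Finset.mul_sum]
      rw [add_comm]
      congr 1
      · refine Finset.sum_congr rfl fun i hi => ?_
        rw [Finset.mem_range] at hi
        have h1 : k + 1 - (i + 1) = k - i := by omega
        simp only [h1, pow_succ', mul_assoc]
      · simp

theorem s12_powcong
    (hmul : ∀ f g : R, ∀ n : ℕ,
      e (f * g) n = ∑ p ∈ Finset.HasAntidiagonal.antidiagonal n, e f p.1 * (κ ^ p.1) (e g p.2))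
    (x : R) (n k : ℕ) :
    e (s12D e (x ^ (k + 1))) n - (k + 1) • e (s12D e x * x ^ k) n ∈ s12C κ n := by
  rw [s12D_pow κ e hmul]
  have h1 : e (∑ i ∈ Finset.range (k + 1), x ^ i * s12D e x * x ^ (k - i))
      = ∑ i ∈ Finset.range (k + 1), e (x ^ i * (s12D e x * x ^ (k - i))) := by
    rw [map_sum]
    exact Finset.sum_congr rfl fun i _ => by rw [mul_assoc]
  rw [h1, Finset.sum_apply]
  have h2 : (k + 1) • e (s12D e x * x ^ k) n
      = ∑ _i ∈ Finset.range (k + 1), e (s12D e x * x ^ k) n := by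
    rw [Finset.sum_const, Finset.card_range]
  rw [h2, ← Finset.sum_sub_distrib]
  refine AddSubgroup.sum_mem _ fun i hi => ?_
  rw [Finset.mem_range, Nat.lt_succ_iff] at hi
  have h3 : (s12D e x * x ^ (k - i)) * x ^ i = s12D e x * x ^ k := by
    rw [mul_assoc, ← pow_add]
    congr 2
    omega
  have := s12_cyc κ e hmul (x ^ i) (s12D e x * x ^ (k - i)) n
  rwa [h3] at this

theorem s12_eadd (x y : R) (m : ℕ) : e (x + y) m = e x m + e y m := by
  rw [map_add]; rfl

theorem s12_esub (x y : R) (m : ℕ) : e (x - y) m = e x m - e y m := by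
  rw [map_sub]; rfl

theorem s12_geom (f : R) (n : ℕ) :
    f * (∑ i ∈ Finset.range (n + 1), (1 - f) ^ i) = 1 - (1 - f) ^ (n + 1) ∧
    (∑ i ∈ Finset.range (n + 1), (1 - f) ^ i) * f = 1 - (1 - f) ^ (n + 1) := by
  constructor
  · have h := mul_geom_sum (1 - f) (n + 1)
    have h2 : (1 - f - 1 : R) = -f := by abel
    rw [h2, neg_mul] at h
    rw [neg_eq_iff_eq_neg.mp h, neg_sub]
  · have h := geom_sum_mul (1 - f) (n + 1)
    have h2 : (1 - f - 1 : R) = -f := by abel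
    rw [h2, mul_neg] at h
    rw [neg_eq_iff_eq_neg.mp h, neg_sub]

theorem s12_one_sub (hone : ∀ n : ℕ, e 1 n = if n = 0 then 1 else 0)
    (f : R) (hf : e f 0 = 1) : ∀ m, m < 1 → e (1 - f) m = 0 := by
  intro m hm
  interval_cases m
  rw [s12_esub, hone, hf]
  simp

theorem s12_keylog
    (hone : ∀ n : ℕ, e 1 n = if n = 0 then 1 else 0)
    (hmul : ∀ f g : R, ∀ n : ℕ,
      e (f * g) n = ∑ p ∈ Finset.HasAntidiagonal.antidiagonal n, e f p.1 * (κ ^ p.1) (e g p.2))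
    (logCoeff : R → ℕ → A)
    (hlog : ∀ (f : R) (n : ℕ),
      logCoeff f n = ∑ k ∈ Finset.range (n + 1), ((-1 : ℚ) ^ (k + 1) / k) • e ((f - 1) ^ k) n)
    (f : R) (hf : e f 0 = 1) (n : ℕ) :
    (n : ℚ) • logCoeff f n - e (s12D e f * ∑ i ∈ Finset.range (n + 1), (1 - f) ^ i) n
      ∈ s12C κ n := by
  have h1f := s12_one_sub e hone f hf
  have hexp : e (s12D e f * ∑ i ∈ Finset.range (n + 1), (1 - f) ^ i) n
      = ∑ i ∈ Finset.range (n + 1), e (s12D e f * (1 - f) ^ i) n := by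
    rw [Finset.mul_sum, map_sum, Finset.sum_apply]
  rw [hlog, Finset.smul_sum, hexp]
  have hS1 : ∑ k ∈ Finset.range (n + 1), (n : ℚ) • (((-1 : ℚ) ^ (k + 1) / k) • e ((f - 1) ^ k) n)
      = ∑ k ∈ Finset.range n,
          (n : ℚ) • (((-1 : ℚ) ^ (k + 1 + 1) / ((k + 1 : ℕ) : ℚ)) • e ((f - 1) ^ (k + 1)) n) := by
    rw [Finset.sum_range_succ']
    norm_num
  have hzn : e (s12D e f * (1 - f) ^ n) n = 0 :=
    s12_ord_mul κ e hmul (s12D_zero_coeff e f) (s12_ord_pow κ e hmul h1f n) n (by omega)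
  have hS2 : ∑ i ∈ Finset.range (n + 1), e (s12D e f * (1 - f) ^ i) n
      = ∑ i ∈ Finset.range n, e (s12D e f * (1 - f) ^ i) n := by
    rw [Finset.sum_range_succ, hzn, add_zero]
  rw [hS1, hS2, ← Finset.sum_sub_distrib]
  refine AddSubgroup.sum_mem _ fun k hk => ?_
  have key := s12_powcong κ e hmul (f - 1) n k
  rw [s12D_coeff, s12D_sub, s12D_one e hone, sub_zero] at key
  have key2 := s12C_qsmul ((-1 : ℚ) ^ k / ((k : ℚ) + 1)) key
  have hk1 : ((k : ℚ) + 1) ≠ 0 := by positivity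
  have hneg : (1 - f) ^ k = ((-1 : ℤ) ^ k) • (f - 1) ^ k := by
    rw [← smul_pow]
    norm_num
  have hz : e (s12D e f * (1 - f) ^ k) n
      = ((-1 : ℤ) ^ k) • e (s12D e f * (f - 1) ^ k) n := by
    rw [hneg, mul_smul_comm, map_zsmul]; rfl
  have heq : (n : ℚ) • (((-1 : ℚ) ^ (k + 1 + 1) / ((k + 1 : ℕ) : ℚ)) • e ((f - 1) ^ (k + 1)) n)
        - e (s12D e f * (1 - f) ^ k) n
      = ((-1 : ℚ) ^ k / ((k : ℚ) + 1)) •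
          ((n • e ((f - 1) ^ (k + 1)) n) - (k + 1) • e (s12D e f * (f - 1) ^ k) n) := by
    rw [hz]
    rw [← Nat.cast_smul_eq_nsmul ℚ n, ← Nat.cast_smul_eq_nsmul ℚ (k + 1),
      ← Int.cast_smul_eq_zsmul ℚ]
    rw [smul_sub, smul_smul, smul_smul, smul_smul]
    congr 1
    · congr 1
      push_cast
      field_simp
      ring
    · congr 1
      push_cast
      field_simp
  rw [heq]
  exact key2

theorem s12_T
    (hone : ∀ n : ℕ, e 1 n = if n = 0 then 1 else 0)
    (hmul : ∀ f g : R, ∀ n : ℕ,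
      e (f * g) n = ∑ p ∈ Finset.HasAntidiagonal.antidiagonal n, e f p.1 * (κ ^ p.1) (e g p.2))
    (u v : R) (hu : e u 0 = 1) (hv : e v 0 = 1) (huv : e (u * v) 0 = 1) (n : ℕ) :
    e (s12D e (u * v) * ∑ i ∈ Finset.range (n + 1), (1 - u * v) ^ i) n
      - e (s12D e u * ∑ i ∈ Finset.range (n + 1), (1 - u) ^ i) n
      - e (s12D e v * ∑ i ∈ Finset.range (n + 1), (1 - v) ^ i) n ∈ s12C κ n := by
  set Gu := ∑ i ∈ Finset.range (n + 1), (1 - u) ^ i with hGu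
  set Gv := ∑ i ∈ Finset.range (n + 1), (1 - v) ^ i with hGv
  set Gc := ∑ i ∈ Finset.range (n + 1), (1 - u * v) ^ i with hGc
  have Zwu : ∀ m, m ≤ n → e ((1 - u) ^ (n + 1)) m = 0 := fun m hm =>
    s12_ord_pow κ e hmul (s12_one_sub e hone u hu) (n + 1) m (by omega)
  have Zwv : ∀ m, m ≤ n → e ((1 - v) ^ (n + 1)) m = 0 := fun m hm =>
    s12_ord_pow κ e hmul (s12_one_sub e hone v hv) (n + 1) m (by omega)
  have Zwc : ∀ m, m ≤ n → e ((1 - u * v) ^ (n + 1)) m = 0 := fun m hm =>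
    s12_ord_pow κ e hmul (s12_one_sub e hone (u * v) huv) (n + 1) m (by omega)
  have hGc1 : (u * v) * Gc = 1 - (1 - u * v) ^ (n + 1) := (s12_geom (u * v) n).1
  have hGc2 : Gc * (u * v) = 1 - (1 - u * v) ^ (n + 1) := (s12_geom (u * v) n).2
  have hGu1 : u * Gu = 1 - (1 - u) ^ (n + 1) := (s12_geom u n).1
  have hGu2 : Gu * u = 1 - (1 - u) ^ (n + 1) := (s12_geom u n).2
  have hGv1 : v * Gv = 1 - (1 - v) ^ (n + 1) := (s12_geom v n).1
  have hGv2 : Gv * v = 1 - (1 - v) ^ (n + 1) := (s12_geom v n).2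
  -- Part 1
  have ident1 : u * (v * Gc - Gu) = (1 - u) ^ (n + 1) - (1 - u * v) ^ (n + 1) := by
    rw [mul_sub, ← mul_assoc, hGc1, hGu1]
    abel
  have ident2 : v * Gc - Gu
      = Gu * ((1 - u) ^ (n + 1) - (1 - u * v) ^ (n + 1))
        + (1 - u) ^ (n + 1) * (v * Gc - Gu) := by
    have h := congrArg (fun t => Gu * t) ident1
    rw [← mul_assoc, hGu2, sub_mul, one_mul] at h
    exact sub_eq_iff_eq_add.mp h
  have hwuc : ∀ m, m ≤ n → e ((1 - u) ^ (n + 1) - (1 - u * v) ^ (n + 1)) m = 0 := by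
    intro m hm
    rw [s12_esub, Zwu m hm, Zwc m hm, sub_zero]
  have hrDu : e ((v * Gc - Gu) * s12D e u) n = 0 := by
    have hexp : (v * Gc - Gu) * s12D e u
        = Gu * (((1 - u) ^ (n + 1) - (1 - u * v) ^ (n + 1)) * s12D e u)
          + (1 - u) ^ (n + 1) * ((v * Gc - Gu) * s12D e u) := by
      conv_lhs => rw [ident2]
      rw [add_mul, mul_assoc, mul_assoc]
    rw [hexp, s12_eadd,
      s12_Zmul_left κ e hmul (s12_Zmul_right κ e hmul hwuc (s12D e u)) Gu n le_rfl,
      s12_Zmul_right κ e hmul Zwu ((v * Gc - Gu) * s12D e u) n le_rfl, add_zero]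
  have c1 := s12_cyc κ e hmul (s12D e u) (v * Gc) n
  have c2 := s12_cyc κ e hmul Gu (s12D e u) n
  have heq1 : e ((v * Gc) * s12D e u) n = e (Gu * s12D e u) n := by
    have h0 : e ((v * Gc) * s12D e u) n - e (Gu * s12D e u) n
        = e ((v * Gc - Gu) * s12D e u) n := by
      rw [← s12_esub, sub_mul]
    exact sub_eq_zero.mp (h0.trans hrDu)
  rw [heq1] at c1
  have S1 : e (s12D e u * (v * Gc)) n - e (s12D e u * Gu) n ∈ s12C κ n := by
    have h := add_mem c1 c2
    convert h using 1
    abel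
  -- Part 2
  have ident1' : (Gc * u - Gv) * v = (1 - v) ^ (n + 1) - (1 - u * v) ^ (n + 1) := by
    rw [sub_mul, mul_assoc, hGc2, hGv2]
    abel
  have ident2' : Gc * u - Gv
      = ((1 - v) ^ (n + 1) - (1 - u * v) ^ (n + 1)) * Gv
        + (Gc * u - Gv) * (1 - v) ^ (n + 1) := by
    have h := congrArg (fun t => t * Gv) ident1'
    rw [mul_assoc, hGv1, mul_sub, mul_one] at h
    exact sub_eq_iff_eq_add.mp h
  have hwvc : ∀ m, m ≤ n → e ((1 - v) ^ (n + 1) - (1 - u * v) ^ (n + 1)) m = 0 := by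
    intro m hm
    rw [s12_esub, Zwv m hm, Zwc m hm, sub_zero]
  have hDvr : e (s12D e v * (Gc * u - Gv)) n = 0 := by
    have hexp : s12D e v * (Gc * u - Gv)
        = s12D e v * (((1 - v) ^ (n + 1) - (1 - u * v) ^ (n + 1)) * Gv)
          + s12D e v * ((Gc * u - Gv) * (1 - v) ^ (n + 1)) := by
      conv_lhs => rw [ident2']
      rw [mul_add]
    rw [hexp, s12_eadd,
      s12_Zmul_left κ e hmul (s12_Zmul_right κ e hmul hwvc Gv) (s12D e v) n le_rfl,
      s12_Zmul_left κ e hmul (s12_Zmul_left κ e hmul Zwv (Gc * u - Gv)) (s12D e v) n le_rfl,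
      add_zero]
  have c1' := s12_cyc κ e hmul u (s12D e v * Gc) n
  have heq2 : e ((s12D e v * Gc) * u) n = e (s12D e v * Gv) n := by
    have h0 : e ((s12D e v * Gc) * u) n - e (s12D e v * Gv) n
        = e (s12D e v * (Gc * u - Gv)) n := by
      rw [← s12_esub, mul_assoc, ← mul_sub]
    exact sub_eq_zero.mp (h0.trans hDvr)
  rw [heq2] at c1'
  -- Assemble
  have hexp : s12D e (u * v) * Gc = s12D e u * (v * Gc) + u * (s12D e v * Gc) := by
    rw [s12D_mul κ e hmul, add_mul, mul_assoc, mul_assoc]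
  rw [hexp, s12_eadd]
  have h := add_mem S1 c1'
  convert h using 1
  abel

end Stmt12Aux

/-- Let `A` be a ring containing ℚ and `κ` an automorphism of `A`.
Work in the twisted power series ring `A_κ[[τ]]` (encoded abstractly via
`e : R ≃+ (ℕ → A)` with twisted-convolution multiplication).  For
`f ∈ W(A, κ) = 1 + τ·A_κ[[τ]]` the `τⁿ`-coefficient of
`log f = Σ_{k≥1} (−1)^{k−1}(f−1)ᵏ/k` is the finite sum
`Σ_{k=1}^{n} ((−1)^{k+1}/k)·coeffₙ((f−1)ᵏ)`.  Let `Pₙ'` be the additive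
subgroup of `A` (the coefficient copy of `Pₙ = Aτⁿ`) generated by the
commutators `x·κᵏ(y) − y·κ^{n−k}(x)` (corresponding to `xy − yx` with
`x ∈ Pₖ`, `y ∈ P_{n−k}`).  Then `log` is additive modulo these commutator
subgroups: for `u, v ∈ W(A, κ)`,
`logₙ(uv) ≡ logₙ(u) + logₙ(v)` in `P̄ₙ = Pₙ/Pₙ'` for every `n`, i.e. `Log`
descends to a group homomorphism `W(A,κ) → P̄ = ∏ₙ Pₙ/Pₙ'`. -/
theorem stmt_12 {A R : Type*} [Ring A] [Algebra ℚ A] [Ring R] (κ : RingAut A)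
    (e : R ≃+ (ℕ → A))
    (hone : ∀ n : ℕ, e 1 n = if n = 0 then 1 else 0)
    (hmul : ∀ f g : R, ∀ n : ℕ,
      e (f * g) n = ∑ p ∈ Finset.HasAntidiagonal.antidiagonal n, e f p.1 * (κ ^ p.1) (e g p.2))
    (logCoeff : R → ℕ → A)
    (hlog : ∀ (f : R) (n : ℕ),
      logCoeff f n = ∑ k ∈ Finset.range (n + 1), ((-1 : ℚ) ^ (k + 1) / k) • e ((f - 1) ^ k) n)
    (u v : R) (hu : e u 0 = 1) (hv : e v 0 = 1) (n : ℕ) :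
    logCoeff (u * v) n - logCoeff u n - logCoeff v n ∈
      AddSubgroup.closure {z : A | ∃ (x y : A) (k : ℕ), k ≤ n ∧
        z = x * (κ ^ k) y - y * (κ ^ (n - k)) x} := by
  rcases Nat.eq_zero_or_pos n with rfl | hn
  · have h0 : ∀ f : R, logCoeff f 0 = 0 := by
      intro f
      rw [hlog]
      simp
    rw [h0, h0, h0]
    simpa using (AddSubgroup.closure _).zero_mem
  · show _ ∈ s12C κ n
    have huv : e (u * v) 0 = 1 := by
      rw [hmul]
      simp [Finset.Nat.antidiagonal_zero, hu, hv]
    have k1 := s12_keylog κ e hone hmul logCoeff hlog (u * v) huv n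
    have k2 := s12_keylog κ e hone hmul logCoeff hlog u hu n
    have k3 := s12_keylog κ e hone hmul logCoeff hlog v hv n
    have T := s12_T κ e hone hmul u v hu hv huv n
    have big : (n : ℚ) • (logCoeff (u * v) n - logCoeff u n - logCoeff v n) ∈ s12C κ n := by
      have h := add_mem (sub_mem (sub_mem k1 k2) k3) T
      convert h using 1
      rw [smul_sub, smul_sub]
      abel
    have fin := s12C_qsmul ((n : ℚ)⁻¹) big
    rwa [inv_smul_smul₀ (Nat.cast_ne_zero.mpr hn.ne')] at fin
end

section
/- Let A be a ring, κ an automorphism, and S an n×n matrix over A_κ((τ)) whose diagonal entries lie in W(A,κ) and whose off-diagonal entries lie in τA_κ[[τ]]. Then S can be reduced by left and right multiplication by elementary matrices to a diagonal matrix whose diagonal entries all lie in W(A,κ); consequently the class of S in K₁(A_κ((τ))) equals the class of a product of elements of W(A,κ). -/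
/-- An elementary matrix `eᵢⱼ(r)`: `1`'s on the diagonal and `r` in position
`(i,j)` with `i ≠ j`. -/
def IsElementaryMatrix {R : Type*} [Ring R] {m : Type*} [DecidableEq m] [Fintype m]
    (E : Matrix m m R) : Prop :=
  ∃ i j r, i ≠ j ∧ E = 1 + Matrix.single i j r

noncomputable def invCoeff {A : Type*} [Ring A] (κ : RingAut A) (f : ℤ → A) : ℕ → A
  | 0 => 1
  | (n+1) => -∑ i ∈ Finset.range (n+1),
      f ((i : ℤ) + 1) * ((κ ^ (i + 1)) (invCoeff κ f (n - i)))
  decreasing_by exact Nat.lt_succ_of_le (Nat.sub_le n i)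

section Aux
variable {A R : Type*} [Ring A] [Ring R] {κ : RingAut A} {e : R ≃+ lbSupport A}
  (hone : ∀ n : ℤ, (e 1).1 n = if n = 0 then 1 else 0)
  (hmul : ∀ f g : R, ∀ n : ℤ,
    (e (f * g)).1 n = ∑ᶠ i : ℤ, (e f).1 i * (κ ^ i) ((e g).1 (n - i)))

include hmul

theorem ordGE_mul {f g : R} {a b : ℤ} (hf : ∀ m < a, (e f).1 m = 0)
    (hg : ∀ m < b, (e g).1 m = 0) {m : ℤ} (hm : m < a + b) : (e (f * g)).1 m = 0 := by
  rw [hmul]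
  refine finsum_eq_zero_of_forall_eq_zero fun i => ?_
  rcases lt_or_ge i a with h | h
  · rw [hf i h, zero_mul]
  · rw [hg _ (by omega), map_zero, mul_zero]

include hone in
theorem exists_right_inv {u : R} (hu0 : (e u).1 0 = 1)
    (hun : ∀ m : ℤ, m < 0 → (e u).1 m = 0) :
    ∃ v : R, (e v).1 0 = 1 ∧ (∀ m : ℤ, m < 0 → (e v).1 m = 0) ∧ u * v = 1 := by
  set f : ℤ → A := fun n => (e u).1 n with hf
  set g : ℤ → A := fun n => if 0 ≤ n then invCoeff κ f n.toNat else 0 with hg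
  have hgmem : g ∈ lbSupport A := ⟨0, fun n hn => if_neg (not_le.2 hn)⟩
  set v : R := e.symm ⟨g, hgmem⟩ with hv
  have hev : ∀ n, (e v).1 n = g n := by intro n; rw [hv]; simp
  have hg0 : g 0 = 1 := by simp [hg, invCoeff]
  have hgneg : ∀ m : ℤ, m < 0 → g m = 0 := fun m hm => if_neg (not_le.2 hm)
  refine ⟨v, by rw [hev 0, hg0], fun m hm => by rw [hev m]; exact hgneg m hm, ?_⟩
  apply e.injective
  apply Subtype.ext
  funext n
  rw [hmul, hone]
  rcases lt_trichotomy n 0 with hn | rfl | hn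
  · rw [if_neg hn.ne]
    refine finsum_eq_zero_of_forall_eq_zero fun i => ?_
    rcases lt_or_ge i 0 with h | h
    · rw [hun i h, zero_mul]
    · rw [hev, hgneg _ (by omega), map_zero, mul_zero]
  · rw [if_pos rfl]
    rw [finsum_eq_single _ 0 ?_]
    · simp [hev, hg0, hu0]
    · intro i hi
      rcases lt_or_ge i 0 with h | h
      · rw [hun i h, zero_mul]
      · rw [hev, hgneg _ (by omega), map_zero, mul_zero]
  · rw [if_neg hn.ne']
    obtain ⟨N, rfl⟩ : ∃ N : ℕ, n = (N : ℤ) + 1 := ⟨(n - 1).toNat, by omega⟩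
    have hsupp : (Function.support fun i : ℤ => (e u).1 i * (κ ^ i) ((e v).1 ((N : ℤ) + 1 - i)))
        ⊆ ↑(Finset.Icc (0 : ℤ) ((N : ℤ) + 1)) := by
      intro i hi
      simp only [Function.mem_support] at hi
      simp only [Finset.coe_Icc, Set.mem_Icc]
      by_contra hcon
      push_neg at hcon
      rcases lt_or_ge i 0 with h | h
      · exact hi (by rw [hun i h, zero_mul])
      · exact hi (by rw [hev, hgneg _ (by omega), map_zero, mul_zero])
    rw [finsum_eq_finset_sum_of_support_subset _ hsupp]
    have hIcc : Finset.Icc (0 : ℤ) ((N : ℤ) + 1)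
        = (Finset.range (N + 2)).map ⟨(Nat.cast : ℕ → ℤ), Nat.cast_injective⟩ := by
      ext x
      simp only [Finset.mem_Icc, Finset.mem_map, Finset.mem_range,
        Function.Embedding.coeFn_mk]
      constructor
      · rintro ⟨h0, h1⟩
        exact ⟨x.toNat, by omega, by omega⟩
      · rintro ⟨m, hm, rfl⟩
        omega
    rw [hIcc, Finset.sum_map]
    simp only [Function.Embedding.coeFn_mk]
    rw [Finset.sum_range_succ']
    have h0term : (e u).1 ((0 : ℕ) : ℤ) * (κ ^ ((0 : ℕ) : ℤ)) ((e v).1 ((N : ℤ) + 1 - (0:ℕ)))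
        = invCoeff κ f (N + 1) := by
      simp only [Nat.cast_zero, zpow_zero, sub_zero]
      rw [hev]
      have : g ((N : ℤ) + 1) = invCoeff κ f (N + 1) := by
        rw [hg]
        simp only [show (0:ℤ) ≤ (N:ℤ) + 1 by omega, if_true]
        norm_num
      rw [this]
      have : (e u).1 0 = 1 := hu0
      simp [hf] at this ⊢
      simp only [this, one_mul]
    rw [h0term]
    have hcast : ∀ x : ℕ, ((x + 1 : ℕ) : ℤ) = (x : ℤ) + 1 := by intro x; push_cast; ring
    have hsum : ∑ x ∈ Finset.range (N + 1),
        (e u).1 (((x + 1 : ℕ)) : ℤ) * (κ ^ (((x + 1 : ℕ)) : ℤ))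
          ((e v).1 ((N : ℤ) + 1 - ((x + 1 : ℕ) : ℤ)))
        = ∑ i ∈ Finset.range (N + 1),
            f ((i : ℤ) + 1) * ((κ ^ (i + 1)) (invCoeff κ f (N - i))) := by
      refine Finset.sum_congr rfl fun x hx => ?_
      have hx' : x ≤ N := by
        simpa [Finset.mem_range, Nat.lt_succ_iff] using hx
      have h1 : (e v).1 ((N : ℤ) + 1 - ((x + 1 : ℕ) : ℤ)) = invCoeff κ f (N - x) := by
        rw [hev, hg]
        have h0 : (0 : ℤ) ≤ (N : ℤ) + 1 - ((x + 1 : ℕ) : ℤ) := by push_cast; omega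
        simp only [h0, if_true]
        congr 1
        push_cast
        omega
      rw [h1, zpow_natCast, hcast x]
    rw [hsum]
    have hinv : invCoeff κ f (N + 1)
        = -∑ i ∈ Finset.range (N + 1), f ((i : ℤ) + 1) * ((κ ^ (i + 1)) (invCoeff κ f (N - i))) := by
      rw [invCoeff]
    rw [hinv]
    exact add_neg_cancel _
include hone in
theorem exists_inv {u : R} (hu0 : (e u).1 0 = 1)
    (hun : ∀ m : ℤ, m < 0 → (e u).1 m = 0) :
    ∃ v : R, (e v).1 0 = 1 ∧ (∀ m : ℤ, m < 0 → (e v).1 m = 0) ∧ u * v = 1 ∧ v * u = 1 := by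
  obtain ⟨v, hv0, hvn, huv⟩ := exists_right_inv hone hmul hu0 hun
  obtain ⟨w, hw0, hwn, hvw⟩ := exists_right_inv hone hmul hv0 hvn
  have huw : u = w := by
    calc u = u * (v * w) := by rw [hvw, mul_one]
    _ = (u * v) * w := by rw [mul_assoc]
    _ = w := by rw [huv, one_mul]
  exact ⟨v, hv0, hvn, huv, by rw [huw]; exact hvw⟩

end Aux

section MatrixAux
variable {R : Type*} [Ring R] {k : ℕ}

/-- Embed a `k × k` matrix into a `(k+1) × (k+1)` matrix as the lower-right
block, with `a` in the upper-left corner and zeros elsewhere. -/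
def liftMat (a : R) (M : Matrix (Fin k) (Fin k) R) : Matrix (Fin (k+1)) (Fin (k+1)) R :=
  Matrix.of (Fin.cons (Fin.cons a 0) (fun i => Fin.cons 0 (M i)))

@[simp] lemma liftMat_00 (a : R) (M : Matrix (Fin k) (Fin k) R) : liftMat a M 0 0 = a := by
  simp [liftMat]

@[simp] lemma liftMat_0s (a : R) (M : Matrix (Fin k) (Fin k) R) (j : Fin k) :
    liftMat a M 0 j.succ = 0 := by simp [liftMat]

@[simp] lemma liftMat_s0 (a : R) (M : Matrix (Fin k) (Fin k) R) (i : Fin k) :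
    liftMat a M i.succ 0 = 0 := by simp [liftMat]

@[simp] lemma liftMat_ss (a : R) (M : Matrix (Fin k) (Fin k) R) (i j : Fin k) :
    liftMat a M i.succ j.succ = M i j := by simp [liftMat]

lemma liftMat_mul (a b : R) (M N : Matrix (Fin k) (Fin k) R) :
    liftMat a M * liftMat b N = liftMat (a * b) (M * N) := by
  ext i j
  rw [Matrix.mul_apply, Fin.sum_univ_succ]
  rcases Fin.eq_zero_or_eq_succ i with rfl | ⟨i', rfl⟩ <;>
    rcases Fin.eq_zero_or_eq_succ j with rfl | ⟨j', rfl⟩ <;>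
    simp [Matrix.mul_apply]

lemma liftMat_one : liftMat (1 : R) 1 = (1 : Matrix (Fin (k+1)) (Fin (k+1)) R) := by
  ext i j
  rcases Fin.eq_zero_or_eq_succ i with rfl | ⟨i', rfl⟩ <;>
    rcases Fin.eq_zero_or_eq_succ j with rfl | ⟨j', rfl⟩ <;>
    simp [Matrix.one_apply, Fin.succ_ne_zero, (Fin.succ_ne_zero _).symm, Fin.succ_inj]

lemma liftMat_diagonal (a : R) (d : Fin k → R) :
    liftMat a (Matrix.diagonal d) = Matrix.diagonal (Fin.cons a d) := by
  ext i j
  rcases Fin.eq_zero_or_eq_succ i with rfl | ⟨i', rfl⟩ <;>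
    rcases Fin.eq_zero_or_eq_succ j with rfl | ⟨j', rfl⟩ <;>
    simp [Matrix.diagonal_apply, Fin.succ_ne_zero, (Fin.succ_ne_zero _).symm, Fin.succ_inj]

lemma liftMat_elem (i j : Fin k) (r : R) :
    liftMat (1 : R) (1 + Matrix.single i j r)
      = 1 + Matrix.single i.succ j.succ r := by
  ext p q
  rcases Fin.eq_zero_or_eq_succ p with rfl | ⟨p', rfl⟩ <;>
    rcases Fin.eq_zero_or_eq_succ q with rfl | ⟨q', rfl⟩ <;>
    simp [Matrix.one_apply, Matrix.single, Fin.succ_ne_zero,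
      (Fin.succ_ne_zero _).symm, Fin.succ_inj]

lemma liftMat_listProd (l : List (Matrix (Fin k) (Fin k) R)) :
    (l.map (liftMat 1)).prod = liftMat 1 l.prod := by
  induction l with
  | nil => simp [liftMat_one]
  | cons x l ih => simp [ih, liftMat_mul]

lemma std_mul_listsum_col (i : Fin k) (r : R) (l : List (Fin k)) (c : Fin k → R) :
    Matrix.single i.succ (0 : Fin (k+1)) r *
      (l.map fun j => Matrix.single j.succ (0 : Fin (k+1)) (c j)).sum = 0 := by
  induction l with
  | nil => simp
  | cons x l ih =>
    rw [List.map_cons, List.sum_cons, mul_add, ih, add_zero,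
      Matrix.single_mul_single_of_ne (h := (Fin.succ_ne_zero x).symm)]

lemma std_mul_listsum_row (j : Fin k) (r : R) (l : List (Fin k)) (c : Fin k → R) :
    Matrix.single (0 : Fin (k+1)) j.succ r *
      (l.map fun i => Matrix.single (0 : Fin (k+1)) i.succ (c i)).sum = 0 := by
  induction l with
  | nil => simp
  | cons x l ih =>
    rw [List.map_cons, List.sum_cons, mul_add, ih, add_zero,
      Matrix.single_mul_single_of_ne (h := Fin.succ_ne_zero j)]

lemma prod_col_elem (l : List (Fin k)) (c : Fin k → R) :
    (l.map fun i => (1 : Matrix (Fin (k+1)) (Fin (k+1)) R)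
        + Matrix.single i.succ 0 (c i)).prod
      = 1 + (l.map fun i => Matrix.single i.succ (0 : Fin (k+1)) (c i)).sum := by
  induction l with
  | nil => simp
  | cons x l ih =>
    rw [List.map_cons, List.prod_cons, ih, List.map_cons, List.sum_cons,
      add_mul, one_mul, mul_add, mul_one, std_mul_listsum_col, add_zero]
    abel

lemma prod_row_elem (l : List (Fin k)) (c : Fin k → R) :
    (l.map fun j => (1 : Matrix (Fin (k+1)) (Fin (k+1)) R)
        + Matrix.single 0 j.succ (c j)).prod
      = 1 + (l.map fun j => Matrix.single (0 : Fin (k+1)) j.succ (c j)).sum := by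
  induction l with
  | nil => simp
  | cons x l ih =>
    rw [List.map_cons, List.prod_cons, ih, List.map_cons, List.sum_cons,
      add_mul, one_mul, mul_add, mul_one, std_mul_listsum_row, add_zero]
    abel

end MatrixAux

/-- Over the twisted Laurent series ring `A_κ((τ))` (encoded
abstractly via `e : R ≃+ lbSupport A`), any `n×n` matrix `S` whose diagonal
entries lie in `W(A,κ) = 1 + τ·A_κ[[τ]]` and whose off-diagonal entries lie in
`τ·A_κ[[τ]]` can be reduced, by left and right multiplication by elementary
matrices, to a diagonal matrix all of whose diagonal entries lie in `W(A,κ)`;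
consequently the class of `S` in `K₁(A_κ((τ)))` equals the class of a product
of elements of `W(A,κ)` (here expressed concretely by the diagonal entries
`d i ∈ W(A,κ)`, since elementary matrices vanish in `K₁`). -/
theorem stmt_16 {A R : Type*} [Ring A] [Ring R] (κ : RingAut A)
    (e : R ≃+ lbSupport A)
    (hone : ∀ n : ℤ, (e 1).1 n = if n = 0 then 1 else 0)
    (hmul : ∀ f g : R, ∀ n : ℤ,
      (e (f * g)).1 n = ∑ᶠ i : ℤ, (e f).1 i * (κ ^ i) ((e g).1 (n - i)))
    (k : ℕ) (S : Matrix (Fin k) (Fin k) R)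
    (hdiag : ∀ i, (e (S i i)).1 0 = 1 ∧ ∀ m : ℤ, m < 0 → (e (S i i)).1 m = 0)
    (hoff : ∀ i j, i ≠ j → ∀ m : ℤ, m ≤ 0 → (e (S i j)).1 m = 0) :
    ∃ (Ls Rs : List (Matrix (Fin k) (Fin k) R)) (d : Fin k → R),
      (∀ E ∈ Ls, IsElementaryMatrix E) ∧
      (∀ E ∈ Rs, IsElementaryMatrix E) ∧
      (∀ i, (e (d i)).1 0 = 1 ∧ ∀ m : ℤ, m < 0 → (e (d i)).1 m = 0) ∧
      Ls.prod * S * Rs.prod = Matrix.diagonal d := by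
  induction k with
  | zero =>
    refine ⟨[], [], fun i => i.elim0, by simp, by simp, fun i => i.elim0, ?_⟩
    ext i j
    exact i.elim0
  | succ k ih =>
    obtain ⟨b, hb0, hbn, hub, hbu⟩ := exists_inv hone hmul (hdiag 0).1 (hdiag 0).2
    set cc : Fin k → R := fun i => -(S i.succ 0 * b) with hcc
    set dd : Fin k → R := fun j => -(b * S 0 j.succ) with hdd
    set Lclear : List (Matrix (Fin (k+1)) (Fin (k+1)) R) :=
      (List.finRange k).map fun i => 1 + Matrix.single i.succ 0 (cc i) with hLclear
    set Rclear : List (Matrix (Fin (k+1)) (Fin (k+1)) R) :=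
      (List.finRange k).map fun j => 1 + Matrix.single 0 j.succ (dd j) with hRclear
    have hzs : ∀ i : Fin k, (0 : Fin (k+1)) ≠ i.succ := fun i => (Fin.succ_ne_zero i).symm
    have hLprod : Lclear.prod
        = 1 + ∑ i : Fin k, Matrix.single i.succ (0 : Fin (k+1)) (cc i) := by
      rw [hLclear, prod_col_elem, ← Fin.sum_univ_def]
    have hRprod : Rclear.prod
        = 1 + ∑ j : Fin k, Matrix.single (0 : Fin (k+1)) j.succ (dd j) := by
      rw [hRclear, prod_row_elem, ← Fin.sum_univ_def]
    have hPS0 : ∀ q, (Lclear.prod * S) 0 q = S 0 q := by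
      intro q
      rw [hLprod, add_mul, one_mul, Matrix.add_apply, Finset.sum_mul, Matrix.sum_apply]
      simp [hzs]
    have hPSs : ∀ (p : Fin k) q, (Lclear.prod * S) p.succ q = S p.succ q + cc p * S 0 q := by
      intro p q
      rw [hLprod, add_mul, one_mul, Matrix.add_apply, Finset.sum_mul, Matrix.sum_apply]
      congr 1
      rw [Finset.sum_eq_single p]
      · rw [Matrix.single_mul_apply_same]
      · intro i _ hip
        apply Matrix.single_mul_apply_of_ne
        exact fun hc => hip (Fin.succ_inj.mp hc).symm
      · simp
    have hT0 : ∀ p, (Lclear.prod * S * Rclear.prod) p 0 = (Lclear.prod * S) p 0 := by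
      intro p
      rw [hRprod, mul_add, mul_one, Matrix.add_apply, Finset.mul_sum, Matrix.sum_apply]
      simp [hzs]
    have hTs : ∀ p (q : Fin k), (Lclear.prod * S * Rclear.prod) p q.succ
        = (Lclear.prod * S) p q.succ + (Lclear.prod * S) p 0 * dd q := by
      intro p q
      rw [hRprod, mul_add, mul_one, Matrix.add_apply, Finset.mul_sum, Matrix.sum_apply]
      congr 1
      rw [Finset.sum_eq_single q]
      · rw [Matrix.mul_single_apply_same]
      · intro j _ hjq
        apply Matrix.mul_single_apply_of_ne
        exact fun hc => hjq (Fin.succ_inj.mp hc).symm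
      · simp
    have hcolzero : ∀ p : Fin k, S p.succ 0 + cc p * S 0 0 = 0 := by
      intro p
      simp only [hcc, neg_mul, mul_assoc, hbu, mul_one, add_neg_cancel]
    have hT00 : (Lclear.prod * S * Rclear.prod) 0 0 = S 0 0 := by rw [hT0, hPS0]
    have hT0s : ∀ q : Fin k, (Lclear.prod * S * Rclear.prod) 0 q.succ = 0 := by
      intro q
      rw [hTs, hPS0, hPS0]
      simp only [hdd, mul_neg, ← mul_assoc, hub, one_mul, add_neg_cancel]
    have hTs0 : ∀ p : Fin k, (Lclear.prod * S * Rclear.prod) p.succ 0 = 0 := by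
      intro p
      rw [hT0, hPSs]
      exact hcolzero p
    have hTss : ∀ p q : Fin k, (Lclear.prod * S * Rclear.prod) p.succ q.succ
        = S p.succ q.succ - S p.succ 0 * (b * S 0 q.succ) := by
      intro p q
      rw [hTs, hPSs, hPSs, hcolzero p, zero_mul, add_zero]
      simp only [hcc, neg_mul, mul_assoc, sub_eq_add_neg]
    set T' : Matrix (Fin k) (Fin k) R :=
      Matrix.of fun p q => S p.succ q.succ - S p.succ 0 * (b * S 0 q.succ) with hT'
    have hTlift : Lclear.prod * S * Rclear.prod = liftMat (S 0 0) T' := by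
      ext p q
      rcases Fin.eq_zero_or_eq_succ p with rfl | ⟨p', rfl⟩ <;>
        rcases Fin.eq_zero_or_eq_succ q with rfl | ⟨q', rfl⟩
      · rw [hT00, liftMat_00]
      · rw [hT0s, liftMat_0s]
      · rw [hTs0, liftMat_s0]
      · rw [hTss, liftMat_ss]
        rfl
    have hord2 : ∀ (p q : Fin k) (m : ℤ), m < 2 →
        (e (S p.succ 0 * (b * S 0 q.succ))).1 m = 0 := by
      intro p q m hm
      refine ordGE_mul hmul (a := 1) (b := 1)
        (fun m' hm' => hoff p.succ 0 (Fin.succ_ne_zero p) m' (by omega)) ?_ (by omega)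
      intro m' hm'
      refine ordGE_mul hmul (a := 0) (b := 1) hbn
        (fun m'' hm'' => hoff 0 q.succ (hzs q) m'' (by omega)) (by omega)
    have hsub : ∀ (x y : R) (m : ℤ), (e (x - y)).1 m = (e x).1 m - (e y).1 m := by
      intro x y m
      rw [map_sub]
      rfl
    have hTval : ∀ p q : Fin k, T' p q = S p.succ q.succ - S p.succ 0 * (b * S 0 q.succ) :=
      fun p q => rfl
    have hdiag' : ∀ i : Fin k, (e (T' i i)).1 0 = 1 ∧ ∀ m : ℤ, m < 0 → (e (T' i i)).1 m = 0 := by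
      intro i
      constructor
      · rw [hTval, hsub, (hdiag i.succ).1, hord2 i i 0 (by norm_num), sub_zero]
      · intro m hm
        rw [hTval, hsub, (hdiag i.succ).2 m hm, hord2 i i m (by omega), sub_zero]
    have hoff' : ∀ i j : Fin k, i ≠ j → ∀ m : ℤ, m ≤ 0 → (e (T' i j)).1 m = 0 := by
      intro i j hij m hm
      rw [hTval, hsub, hoff i.succ j.succ (fun hc => hij (Fin.succ_inj.mp hc)) m hm,
        hord2 i j m (by omega), sub_zero]
    obtain ⟨Ls', Rs', d', hLs', hRs', hd', hdEq⟩ := ih T' hdiag' hoff'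
    refine ⟨Ls'.map (liftMat 1) ++ Lclear, Rclear ++ Rs'.map (liftMat 1),
      Fin.cons (S 0 0) d', ?_, ?_, ?_, ?_⟩
    · intro E hE
      rcases List.mem_append.mp hE with hE | hE
      · obtain ⟨E', hE', rfl⟩ := List.mem_map.mp hE
        obtain ⟨i, j, r, hij, rfl⟩ := hLs' E' hE'
        rw [liftMat_elem]
        exact ⟨i.succ, j.succ, r, fun hc => hij (Fin.succ_inj.mp hc), rfl⟩
      · rw [hLclear] at hE
        obtain ⟨i, _, rfl⟩ := List.mem_map.mp hE
        exact ⟨i.succ, 0, cc i, Fin.succ_ne_zero i, rfl⟩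
    · intro E hE
      rcases List.mem_append.mp hE with hE | hE
      · rw [hRclear] at hE
        obtain ⟨j, _, rfl⟩ := List.mem_map.mp hE
        exact ⟨0, j.succ, dd j, hzs j, rfl⟩
      · obtain ⟨E', hE', rfl⟩ := List.mem_map.mp hE
        obtain ⟨i, j, r, hij, rfl⟩ := hRs' E' hE'
        rw [liftMat_elem]
        exact ⟨i.succ, j.succ, r, fun hc => hij (Fin.succ_inj.mp hc), rfl⟩
    · intro i
      refine Fin.cases ?_ ?_ i
      · simpa using hdiag 0
      · intro i'
        simpa using hd' i'
    · rw [List.prod_append, List.prod_append, liftMat_listProd, liftMat_listProd]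
      have hassoc : liftMat 1 Ls'.prod * Lclear.prod * S * (Rclear.prod * liftMat 1 Rs'.prod)
          = liftMat 1 Ls'.prod * (Lclear.prod * S * Rclear.prod) * liftMat 1 Rs'.prod := by
        simp only [mul_assoc]
      rw [hassoc, hTlift, liftMat_mul, liftMat_mul, one_mul, mul_one, hdEq, liftMat_diagonal]
end

section
/- Let F be a free group on x₁, …, xₙ, and suppose elements y₁, …, yₙ ∈ F form a basis of the subgroup they generate, with each xᵢ expressible in terms of y's via an automorphism of F sending xᵢ to yᵢ. Then the Fox Jacobian matrix (∂yⱼ/∂xᵢ) over ℤ[F] is invertible over ℤ[F], with inverse given by the image of the Jacobian (∂xⱼ/∂yᵢ) of the inverse automorphism. -/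
/-- The canonical inclusion of a free group into its integral group ring. -/
noncomputable def fgOf (n : ℕ) : FreeGroup (Fin n) →* MonoidAlgebra ℤ (FreeGroup (Fin n)) :=
  MonoidAlgebra.of ℤ (FreeGroup (Fin n))

namespace Stmt18Aux

variable {n : ℕ}

lemma maphat_fg (f : FreeGroup (Fin n) →* FreeGroup (Fin n)) (w : FreeGroup (Fin n)) :
    MonoidAlgebra.mapDomainRingHom ℤ f (fgOf n w) = fgOf n (f w) := by
  simp [fgOf, MonoidAlgebra.of_apply, MonoidAlgebra.mapDomainRingHom_apply,
    Finsupp.mapDomain_single]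

lemma deriv_one (e : MonoidAlgebra ℤ (FreeGroup (Fin n)) →ₗ[ℤ] MonoidAlgebra ℤ (FreeGroup (Fin n)))
    (he : ∀ h k : FreeGroup (Fin n),
      e (fgOf n (h * k)) = e (fgOf n h) + fgOf n h * e (fgOf n k)) :
    e (fgOf n 1) = 0 := by
  have h := he 1 1
  rw [mul_one, map_one, one_mul] at h
  have := add_eq_right.mp h.symm
  simpa [map_one] using this

lemma deriv_inv (e : MonoidAlgebra ℤ (FreeGroup (Fin n)) →ₗ[ℤ] MonoidAlgebra ℤ (FreeGroup (Fin n)))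
    (he : ∀ h k : FreeGroup (Fin n),
      e (fgOf n (h * k)) = e (fgOf n h) + fgOf n h * e (fgOf n k))
    (w : FreeGroup (Fin n)) :
    e (fgOf n w⁻¹) = -(fgOf n w⁻¹ * e (fgOf n w)) := by
  have h := he w⁻¹ w
  rw [inv_mul_cancel, deriv_one e he] at h
  exact eq_neg_of_add_eq_zero_left h.symm

/-- The fundamental formula of Fox calculus: any "derivation" `e` is determined on the image of
the group by its values on the generators, via the Fox derivative coefficients. -/
lemma fundamental
    (d : Fin n → (MonoidAlgebra ℤ (FreeGroup (Fin n)) →ₗ[ℤ] MonoidAlgebra ℤ (FreeGroup (Fin n))))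
    (hbasis : ∀ i j : Fin n, d i (fgOf n (FreeGroup.of j)) = if j = i then 1 else 0)
    (hprod : ∀ i : Fin n, ∀ h k : FreeGroup (Fin n),
      d i (fgOf n (h * k)) = d i (fgOf n h) + fgOf n h * d i (fgOf n k))
    (e : MonoidAlgebra ℤ (FreeGroup (Fin n)) →ₗ[ℤ] MonoidAlgebra ℤ (FreeGroup (Fin n)))
    (he : ∀ h k : FreeGroup (Fin n),
      e (fgOf n (h * k)) = e (fgOf n h) + fgOf n h * e (fgOf n k))
    (w : FreeGroup (Fin n)) :
    e (fgOf n w) = ∑ k, d k (fgOf n w) * e (fgOf n (FreeGroup.of k)) := by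
  induction w using FreeGroup.induction_on with
  | C1 =>
    simp only [deriv_one e he, deriv_one (d _) (hprod _), zero_mul, Finset.sum_const_zero]
  | of x =>
    have hpx : (pure x : FreeGroup (Fin n)) = FreeGroup.of x := rfl
    rw [Finset.sum_eq_single x (fun b _ hb => by
        rw [hbasis]; simp [Ne.symm hb]) (by simp), hbasis]
    simp
  | inv_of x ih =>
    rw [deriv_inv e he, ih, Finset.mul_sum, ← Finset.sum_neg_distrib]
    refine Finset.sum_congr rfl fun k _ => ?_
    rw [deriv_inv (d k) (hprod k), neg_mul, mul_assoc]
  | mul x y ihx ihy =>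
    rw [he, ihx, ihy, Finset.mul_sum, ← Finset.sum_add_distrib]
    refine Finset.sum_congr rfl fun k _ => ?_
    rw [hprod k, add_mul, mul_assoc]

end Stmt18Aux

open Stmt18Aux in
/-- Let `F` be the free group on `x₁,…,xₙ` with Fox derivatives
`∂/∂xᵢ` on `ℤ[F]`, and let `y₁,…,yₙ` be a basis of the subgroup they generate,
given as `yᵢ = λ(xᵢ)` for an automorphism `λ` of `F`.  Then the Fox Jacobian
matrix `M = (∂yⱼ/∂xᵢ)` is invertible over `ℤ[F]`, with inverse the image under
`λ̂ : ℤ[F] → ℤ[F]` of the Jacobian of the inverse automorphism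
(`M⁻¹ = (λ̂(∂(λ⁻¹xⱼ)/∂xᵢ))`, suitably indexed). -/
theorem stmt_18 {n : ℕ}
    (d : Fin n → (MonoidAlgebra ℤ (FreeGroup (Fin n)) →ₗ[ℤ] MonoidAlgebra ℤ (FreeGroup (Fin n))))
    (hbasis : ∀ i j : Fin n, d i (fgOf n (FreeGroup.of j)) = if j = i then 1 else 0)
    (hprod : ∀ i : Fin n, ∀ h k : FreeGroup (Fin n),
      d i (fgOf n (h * k)) = d i (fgOf n h) + fgOf n h * d i (fgOf n k))
    (lam : FreeGroup (Fin n) ≃* FreeGroup (Fin n)) :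
    IsUnit (Matrix.of fun k i : Fin n => d i (fgOf n (lam (FreeGroup.of k)))) ∧
    (Matrix.of fun k i : Fin n => d i (fgOf n (lam (FreeGroup.of k)))) *
      (Matrix.of fun j k : Fin n =>
        MonoidAlgebra.mapDomainRingHom ℤ lam.toMonoidHom
          (d k (fgOf n (lam.symm (FreeGroup.of j))))) = 1 ∧
    (Matrix.of fun j k : Fin n =>
        MonoidAlgebra.mapDomainRingHom ℤ lam.toMonoidHom
          (d k (fgOf n (lam.symm (FreeGroup.of j))))) *
      (Matrix.of fun k i : Fin n => d i (fgOf n (lam (FreeGroup.of k)))) = 1 := by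
  set Lh : MonoidAlgebra ℤ (FreeGroup (Fin n)) →+* MonoidAlgebra ℤ (FreeGroup (Fin n)) :=
    MonoidAlgebra.mapDomainRingHom ℤ lam.toMonoidHom with hLh
  set Li : MonoidAlgebra ℤ (FreeGroup (Fin n)) →+* MonoidAlgebra ℤ (FreeGroup (Fin n)) :=
    MonoidAlgebra.mapDomainRingHom ℤ lam.symm.toMonoidHom with hLi
  have hLhfg : ∀ w, Lh (fgOf n w) = fgOf n (lam w) := fun w => maphat_fg _ w
  have hLifg : ∀ w, Li (fgOf n w) = fgOf n (lam.symm w) := fun w => maphat_fg _ w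
  have hLhLi : ∀ x, Lh (Li x) = x := by
    intro x
    rw [← RingHom.comp_apply, hLh, hLi, ← MonoidAlgebra.mapDomainRingHom_comp]
    have : lam.toMonoidHom.comp lam.symm.toMonoidHom = MonoidHom.id _ := by
      ext w; simp
    rw [this, MonoidAlgebra.mapDomainRingHom_id]; rfl
  have hLiLh : ∀ x, Li (Lh x) = x := by
    intro x
    rw [← RingHom.comp_apply, hLh, hLi, ← MonoidAlgebra.mapDomainRingHom_comp]
    have : lam.symm.toMonoidHom.comp lam.toMonoidHom = MonoidHom.id _ := by
      ext w; simp
    rw [this, MonoidAlgebra.mapDomainRingHom_id]; rfl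
  have key1 : ∀ j i : Fin n,
      (if j = i then (1 : MonoidAlgebra ℤ (FreeGroup (Fin n))) else 0) =
        ∑ k, Lh (d k (fgOf n (lam.symm (FreeGroup.of j)))) *
          d i (fgOf n (lam (FreeGroup.of k))) := by
    intro j i
    set f : MonoidAlgebra ℤ (FreeGroup (Fin n)) →ₗ[ℤ] MonoidAlgebra ℤ (FreeGroup (Fin n)) :=
      Li.toAddMonoidHom.toIntLinearMap ∘ₗ (d i) ∘ₗ Lh.toAddMonoidHom.toIntLinearMap with hf
    have hfapp : ∀ x, f x = Li (d i (Lh x)) := fun x => rfl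
    have hfe : ∀ h k : FreeGroup (Fin n),
        f (fgOf n (h * k)) = f (fgOf n h) + fgOf n h * f (fgOf n k) := by
      intro h k
      rw [hfapp, hfapp, hfapp, hLhfg, hLhfg, hLhfg, map_mul, hprod, map_add, map_mul, hLifg]
      simp
    have h := fundamental d hbasis hprod f hfe (lam.symm (FreeGroup.of j))
    simp only [hfapp, hLhfg, MulEquiv.apply_symm_apply, hbasis] at h
    have h2 := congrArg Lh h
    simp only [map_sum, map_mul, hLhLi] at h2
    exact h2
  have key2 : ∀ i j : Fin n,
      (if i = j then (1 : MonoidAlgebra ℤ (FreeGroup (Fin n))) else 0) =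
        ∑ k, d k (fgOf n (lam (FreeGroup.of i))) *
          Lh (d j (fgOf n (lam.symm (FreeGroup.of k)))) := by
    intro i j
    set g : MonoidAlgebra ℤ (FreeGroup (Fin n)) →ₗ[ℤ] MonoidAlgebra ℤ (FreeGroup (Fin n)) :=
      Lh.toAddMonoidHom.toIntLinearMap ∘ₗ (d j) ∘ₗ Li.toAddMonoidHom.toIntLinearMap with hg
    have hgapp : ∀ x, g x = Lh (d j (Li x)) := fun x => rfl
    have hge : ∀ h k : FreeGroup (Fin n),
        g (fgOf n (h * k)) = g (fgOf n h) + fgOf n h * g (fgOf n k) := by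
      intro h k
      rw [hgapp, hgapp, hgapp, hLifg, hLifg, hLifg, map_mul, hprod, map_add, map_mul, hLhfg]
      simp
    have h := fundamental d hbasis hprod g hge (lam (FreeGroup.of i))
    simp only [hgapp, hLifg, MulEquiv.symm_apply_apply, hbasis] at h
    rw [← h]
    split <;> simp
  have h2 : (Matrix.of fun k i : Fin n => d i (fgOf n (lam (FreeGroup.of k)))) *
      (Matrix.of fun j k : Fin n =>
        MonoidAlgebra.mapDomainRingHom ℤ lam.toMonoidHom
          (d k (fgOf n (lam.symm (FreeGroup.of j))))) = 1 := by
    refine Matrix.ext fun i j => ?_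
    rw [Matrix.mul_apply, Matrix.one_apply]
    simp only [Matrix.of_apply]
    exact (key2 i j).symm
  have h3 : (Matrix.of fun j k : Fin n =>
        MonoidAlgebra.mapDomainRingHom ℤ lam.toMonoidHom
          (d k (fgOf n (lam.symm (FreeGroup.of j))))) *
      (Matrix.of fun k i : Fin n => d i (fgOf n (lam (FreeGroup.of k)))) = 1 := by
    refine Matrix.ext fun j i => ?_
    rw [Matrix.mul_apply, Matrix.one_apply]
    simp only [Matrix.of_apply]
    exact (key1 j i).symm
  exact ⟨⟨⟨_, _, h2, h3⟩, rfl⟩, h2, h3⟩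
end
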